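/- (Shift lemma for doubly-robust weights.) Under the support assumption, for any n ≥ 0 and any bounded function q : S×A → ℝ, E_{τ∼p_{π_b}}[Σ_{t=1}^{∞} w(t,n) γ^{t−1} q(S_t,A_t)] = E_{τ∼p_{π_b}}[Σ_{t=1}^{∞} w(t−1,n) γ^{t−1} Σ_{a∈A} π_e(a|S_t) q(S_t,a)], where w(t,n) := (d^{π_e}(S_{t−n},A_{t−n})/d^{π_b}(S_{t−n},A_{t−n})) · Π_{j=0}^{n−1} ρ_{t−j} if t > n, w(t,n) := ρ_{1:t} if 1 ≤ t ≤ n, and w(0,n) := 1; all distribution ratios are well defined p_{π_b}-almost surely and both series converge absolutely in expectation. -/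
import Mathlib


open Finset
set_option linter.unusedSectionVars false
set_option maxHeartbeats 1000000

variable {S A : Type*} [Fintype S] [Fintype A] [DecidableEq S] [DecidableEq A]
  [Inhabited S] [Inhabited A]

/-- Weight contributed by the `t`-th step of trajectory `τ` under initial
distribution `d1`, transition kernel `T` and policy `π` (`π s a = π(a|s)`,
`T s a s' = T(s'|s,a)`). -/
noncomputable def stepW (d1 : S → ℝ) (T : S → A → S → ℝ) (π : S → A → ℝ)
    (τ : ℕ → S × A) : ℕ → ℝ
  | 0 => d1 (τ 0).1 * π (τ 0).1 (τ 0).2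
  | t + 1 => T (τ t).1 (τ t).2 (τ (t + 1)).1 * π (τ (t + 1)).1 (τ (t + 1)).2

/-- Probability under `p_π` of the first `n` steps (times `0, …, n-1`) of `τ`. -/
noncomputable def preP (d1 : S → ℝ) (T : S → A → S → ℝ) (π : S → A → ℝ)
    (n : ℕ) (τ : ℕ → S × A) : ℝ :=
  ∏ t ∈ range n, stepW d1 T π τ t

/-- Extension of a length-`n` prefix to an infinite trajectory. -/
def extTraj {n : ℕ} (σ : Fin n → S × A) : ℕ → S × A :=
  fun t => if h : t < n then σ ⟨t, h⟩ else default

/-- Expectation under `p_π` of a function depending only on the first `n` steps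
of the trajectory. -/
noncomputable def expVal (d1 : S → ℝ) (T : S → A → S → ℝ) (π : S → A → ℝ)
    (n : ℕ) (f : (ℕ → S × A) → ℝ) : ℝ :=
  ∑ σ : Fin n → S × A, preP d1 T π n (extTraj σ) * f (extTraj σ)

/-- `d_t^π(s,a)`, the time-`t` state-action distribution (time is 0-indexed,
so `t = 0` is the paper's time `1`). -/
noncomputable def dSA (d1 : S → ℝ) (T : S → A → S → ℝ) (π : S → A → ℝ)
    (t : ℕ) (s : S) (a : A) : ℝ :=
  expVal d1 T π (t + 1) (fun τ => if τ t = (s, a) then 1 else 0)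

/-- Single-step likelihood ratio `ρ_t = π_e(A_t|S_t)/π_b(A_t|S_t)`
(0-indexed time). -/
noncomputable def rho (πb πe : S → A → ℝ) (τ : ℕ → S × A) (t : ℕ) : ℝ :=
  πe (τ t).1 (τ t).2 / πb (τ t).1 (τ t).2

/-- Conditional expectation under `p_π` given `(S_t, A_t) = (s, a)`, for a
function of the first `n` steps. -/
noncomputable def condExpSA (d1 : S → ℝ) (T : S → A → S → ℝ) (π : S → A → ℝ)
    (n t : ℕ) (s : S) (a : A) (f : (ℕ → S × A) → ℝ) : ℝ :=
  expVal d1 T π n (fun τ => if τ t = (s, a) then f τ else 0) / dSA d1 T π t s a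

/-- Averaged state-action distribution `d_{1:Th}^π` over the first `Th` steps
with discount `γ`. -/
noncomputable def dAvg (d1 : S → ℝ) (T : S → A → S → ℝ) (π : S → A → ℝ)
    (γ : ℝ) (Th : ℕ) (s : S) (a : A) : ℝ :=
  (∑ t ∈ range Th, γ ^ t * dSA d1 T π t s a) / (∑ t ∈ range Th, γ ^ t)

/-- Discounted average state-action occupancy `d^π` (infinite horizon),
`d^π(s,a) = (1-γ) Σ_{t≥1} γ^{t-1} d_t^π(s,a)`. -/
noncomputable def dInf (d1 : S → ℝ) (T : S → A → S → ℝ) (π : S → A → ℝ)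
    (γ : ℝ) (s : S) (a : A) : ℝ :=
  (1 - γ) * ∑' t : ℕ, γ ^ t * dSA d1 T π t s a

/-- Infinite-horizon value `J(π) = E_{p_π}[Σ_{t≥1} γ^{t-1} R_t]`. -/
noncomputable def Jinf (d1 : S → ℝ) (T : S → A → S → ℝ) (π : S → A → ℝ)
    (r : S → A → ℝ) (γ : ℝ) : ℝ :=
  ∑' t : ℕ, γ ^ t * expVal d1 T π (t + 1) (fun τ => r (τ t).1 (τ t).2)

/-- Doubly-robust weight `w(m, n)` of the paper (`m` is the paper's 1-indexed
time, with `w(0, n) = 1`). -/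
noncomputable def wDR (d1 : S → ℝ) (T : S → A → S → ℝ) (πb πe : S → A → ℝ)
    (γ : ℝ) (n : ℕ) (τ : ℕ → S × A) (m : ℕ) : ℝ :=
  if m = 0 then 1
  else if m ≤ n then ∏ j ∈ range m, rho πb πe τ j
  else (dInf d1 T πe γ (τ (m - n - 1)).1 (τ (m - n - 1)).2 /
        dInf d1 T πb γ (τ (m - n - 1)).1 (τ (m - n - 1)).2) *
      ∏ j ∈ Icc (m - n) (m - 1), rho πb πe τ j


/-- One-step backward propagation under kernel `T` and policy `π`. -/
noncomputable def eStep (T : S → A → S → ℝ) (π : S → A → ℝ) (f : S → A → ℝ) :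
    S → A → ℝ :=
  fun s a => ∑ s', T s a s' * ∑ a', π s' a' * f s' a'

section Aux
variable (d1 : S → ℝ) (T : S → A → S → ℝ) (π πb πe : S → A → ℝ)

lemma extTraj_snoc_lt {m : ℕ} (σ : Fin m → S × A) (p : S × A) {t : ℕ} (ht : t < m) :
    extTraj (Fin.snoc σ p) t = extTraj σ t := by
  simp only [extTraj, dif_pos ht, dif_pos (Nat.lt_succ_of_lt ht)]
  rw [Fin.snoc]
  simp [ht]

lemma extTraj_snoc_self {m : ℕ} (σ : Fin m → S × A) (p : S × A) :
    extTraj (Fin.snoc σ p) m = p := by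
  simp only [extTraj, dif_pos (Nat.lt_succ_self m)]
  rw [Fin.snoc]
  simp

lemma stepW_congr {τ τ' : ℕ → S × A} (t : ℕ) (h : ∀ u ≤ t, τ u = τ' u) :
    stepW d1 T π τ t = stepW d1 T π τ' t := by
  cases t with
  | zero => simp [stepW, h 0 le_rfl]
  | succ t => simp [stepW, h t (Nat.le_succ t), h (t+1) le_rfl]

lemma preP_congr {m : ℕ} {τ τ' : ℕ → S × A} (h : ∀ u < m, τ u = τ' u) :
    preP d1 T π m τ = preP d1 T π m τ' := by
  refine Finset.prod_congr rfl fun t ht => ?_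
  exact stepW_congr d1 T π t fun u hu => h u (lt_of_le_of_lt hu (mem_range.mp ht))

lemma expVal_succ (m : ℕ) (f : (ℕ → S × A) → ℝ) :
    expVal d1 T π (m + 1) f =
      ∑ σ : Fin m → S × A, preP d1 T π m (extTraj σ) *
        ∑ p : S × A, stepW d1 T π (extTraj (Fin.snoc σ p)) m *
          f (extTraj (Fin.snoc σ p)) := by
  rw [expVal, ← (Fin.snocEquiv (fun _ => S × A)).sum_comp, Fintype.sum_prod_type]
  rw [Finset.sum_comm]
  refine Finset.sum_congr rfl fun σ _ => ?_
  rw [Finset.mul_sum]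
  refine Finset.sum_congr rfl fun p _ => ?_
  have he : (Fin.snocEquiv (fun _ => S × A)) (p, σ) = Fin.snoc σ p := rfl
  rw [he, preP, Finset.prod_range_succ, ← preP]
  rw [preP_congr d1 T π (τ' := extTraj σ) (fun u hu => extTraj_snoc_lt σ p hu)]
  ring

lemma expVal_congr (m : ℕ) {f f' : (ℕ → S × A) → ℝ} (h : ∀ τ, f τ = f' τ) :
    expVal d1 T π m f = expVal d1 T π m f' := by
  simp only [expVal]; exact Finset.sum_congr rfl fun σ _ => by rw [h]

lemma stepW_nonneg (hd1 : ∀ s, 0 ≤ d1 s) (hT : ∀ s a s', 0 ≤ T s a s')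
    (hπ : ∀ s a, 0 ≤ π s a) (τ : ℕ → S × A) (t : ℕ) : 0 ≤ stepW d1 T π τ t := by
  cases t with
  | zero => exact mul_nonneg (hd1 _) (hπ _ _)
  | succ t => exact mul_nonneg (hT _ _ _) (hπ _ _)

lemma preP_nonneg (hd1 : ∀ s, 0 ≤ d1 s) (hT : ∀ s a s', 0 ≤ T s a s')
    (hπ : ∀ s a, 0 ≤ π s a) (m : ℕ) (τ : ℕ → S × A) : 0 ≤ preP d1 T π m τ :=
  Finset.prod_nonneg fun t _ => stepW_nonneg d1 T π hd1 hT hπ τ t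

lemma sum_stepW_snoc (hd1sum : ∑ s, d1 s = 1) (hTsum : ∀ s a, ∑ s', T s a s' = 1)
    (hπsum : ∀ s, ∑ a, π s a = 1) (m : ℕ) (σ : Fin m → S × A) :
    ∑ p : S × A, stepW d1 T π (extTraj (Fin.snoc σ p)) m = 1 := by
  cases m with
  | zero =>
    have h : ∀ p : S × A, stepW d1 T π (extTraj (Fin.snoc σ p)) 0
        = d1 p.1 * π p.1 p.2 := by
      intro p
      simp only [stepW, extTraj_snoc_self]
    rw [Finset.sum_congr rfl fun p _ => h p, Fintype.sum_prod_type]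
    calc ∑ s, ∑ a, d1 s * π s a = ∑ s, d1 s * ∑ a, π s a := by
          refine Finset.sum_congr rfl fun s _ => ?_; rw [Finset.mul_sum]
      _ = 1 := by simp only [hπsum, mul_one]; exact hd1sum
  | succ t =>
    have h : ∀ p : S × A, stepW d1 T π (extTraj (Fin.snoc σ p)) (t+1)
        = T (extTraj σ t).1 (extTraj σ t).2 p.1 * π p.1 p.2 := by
      intro p
      simp only [stepW, extTraj_snoc_self, extTraj_snoc_lt σ p (Nat.lt_succ_self t)]
    rw [Finset.sum_congr rfl fun p _ => h p, Fintype.sum_prod_type]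
    calc ∑ s', ∑ a', T (extTraj σ t).1 (extTraj σ t).2 s' * π s' a'
        = ∑ s', T (extTraj σ t).1 (extTraj σ t).2 s' * ∑ a', π s' a' := by
          refine Finset.sum_congr rfl fun s _ => ?_; rw [Finset.mul_sum]
      _ = 1 := by simp only [hπsum, mul_one]; exact hTsum _ _

lemma expVal_const (hd1sum : ∑ s, d1 s = 1) (hTsum : ∀ s a, ∑ s', T s a s' = 1)
    (hπsum : ∀ s, ∑ a, π s a = 1) (m : ℕ) (c : ℝ) :
    expVal d1 T π m (fun _ => c) = c := by
  induction m with
  | zero => simp [expVal, preP]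
  | succ m ih =>
    rw [expVal_succ]
    have h : ∀ σ : Fin m → S × A,
        (∑ p : S × A, stepW d1 T π (extTraj (Fin.snoc σ p)) m * c)
          = c := by
      intro σ
      rw [← Finset.sum_mul, sum_stepW_snoc d1 T π hd1sum hTsum hπsum, one_mul]
    calc ∑ σ : Fin m → S × A, preP d1 T π m (extTraj σ) *
          ∑ p : S × A, stepW d1 T π (extTraj (Fin.snoc σ p)) m * c
        = ∑ σ : Fin m → S × A, preP d1 T π m (extTraj σ) * c := by
          exact Finset.sum_congr rfl fun σ _ => by rw [h σ]
      _ = c := ih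


lemma expVal_coord (m : ℕ) (f : S × A → ℝ) :
    expVal d1 T π (m + 1) (fun τ => f (τ m)) = ∑ p : S × A, dSA d1 T π m p.1 p.2 * f p := by
  have h : ∀ σ : Fin (m+1) → S × A,
      ∑ p : S × A, (if extTraj σ m = p then (1:ℝ) else 0) * f p = f (extTraj σ m) := by
    intro σ
    rw [Finset.sum_eq_single (extTraj σ m)]
    · simp
    · intro b _ hb; simp [Ne.symm hb]
    · simp
  simp only [dSA, expVal, Finset.sum_mul]
  rw [Finset.sum_comm]
  refine Finset.sum_congr rfl fun σ _ => ?_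
  rw [← h σ, Finset.mul_sum]
  exact Finset.sum_congr rfl fun p _ => by ring

lemma dSA_zero (s : S) (a : A) : dSA d1 T π 0 s a = d1 s * π s a := by
  haveI : Subsingleton (Fin 0 → S × A) := ⟨fun a b => funext fun i => i.elim0⟩
  rw [dSA, expVal_succ, Fintype.sum_subsingleton _ (fun i : Fin 0 => i.elim0)]
  have h0 : ∀ p : S × A, extTraj (Fin.snoc (fun i : Fin 0 => i.elim0) p) 0 = p :=
    fun p => extTraj_snoc_self _ p
  simp only [preP, Finset.range_zero, Finset.prod_empty, one_mul, stepW, h0]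
  rw [Finset.sum_eq_single ((s,a) : S × A)]
  · simp
  · intro b _ hb; simp [hb]
  · simp

lemma dSA_nonneg (hd1 : ∀ s, 0 ≤ d1 s) (hT : ∀ s a s', 0 ≤ T s a s')
    (hπ : ∀ s a, 0 ≤ π s a) (m : ℕ) (s : S) (a : A) : 0 ≤ dSA d1 T π m s a := by
  rw [dSA, expVal]
  refine Finset.sum_nonneg fun σ _ => mul_nonneg (preP_nonneg d1 T π hd1 hT hπ _ _) ?_
  split <;> norm_num

lemma dSA_sum (hd1sum : ∑ s, d1 s = 1) (hTsum : ∀ s a, ∑ s', T s a s' = 1)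
    (hπsum : ∀ s, ∑ a, π s a = 1) (m : ℕ) :
    ∑ p : S × A, dSA d1 T π m p.1 p.2 = 1 := by
  calc ∑ p : S × A, dSA d1 T π m p.1 p.2
      = ∑ p : S × A, dSA d1 T π m p.1 p.2 * (fun _ : S × A => (1:ℝ)) p := by simp
    _ = expVal d1 T π (m+1) (fun τ => (fun _ : S × A => (1:ℝ)) (τ m)) :=
        (expVal_coord d1 T π m _).symm
    _ = 1 := expVal_const d1 T π hd1sum hTsum hπsum (m+1) 1

lemma dSA_le_one (hd1 : ∀ s, 0 ≤ d1 s) (hd1sum : ∑ s, d1 s = 1)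
    (hT : ∀ s a s', 0 ≤ T s a s') (hTsum : ∀ s a, ∑ s', T s a s' = 1)
    (hπ : ∀ s a, 0 ≤ π s a) (hπsum : ∀ s, ∑ a, π s a = 1) (m : ℕ) (s : S) (a : A) :
    dSA d1 T π m s a ≤ 1 := by
  have h := Finset.single_le_sum (f := fun p : S × A => dSA d1 T π m p.1 p.2)
    (fun p _ => dSA_nonneg d1 T π hd1 hT hπ m p.1 p.2) (Finset.mem_univ ((s,a) : S × A))
  rw [dSA_sum d1 T π hd1sum hTsum hπsum m] at h
  exact h

lemma dSA_succ (m : ℕ) (s' : S) (a' : A) :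
    dSA d1 T π (m+1) s' a' =
      (∑ p : S × A, dSA d1 T π m p.1 p.2 * T p.1 p.2 s') * π s' a' := by
  rw [dSA, expVal_succ]
  have h : ∀ σ : Fin (m+1) → S × A,
      (∑ p : S × A, stepW d1 T π (extTraj (Fin.snoc σ p)) (m+1) *
        (if extTraj (Fin.snoc σ p) (m+1) = (s',a') then (1:ℝ) else 0))
      = T (extTraj σ m).1 (extTraj σ m).2 s' * π s' a' := by
    intro σ
    have hs : ∀ p : S × A, stepW d1 T π (extTraj (Fin.snoc σ p)) (m+1)
        = T (extTraj σ m).1 (extTraj σ m).2 p.1 * π p.1 p.2 := by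
      intro p
      simp only [stepW, extTraj_snoc_self, extTraj_snoc_lt σ p (Nat.lt_succ_self m)]
    rw [Finset.sum_congr rfl fun p _ => by rw [hs p, extTraj_snoc_self]]
    rw [Finset.sum_eq_single ((s',a') : S × A)]
    · simp
    · intro b _ hb; simp [hb]
    · simp
  rw [Finset.sum_congr rfl fun σ _ => by rw [h σ]]
  have h2 := expVal_coord d1 T π m (fun p => T p.1 p.2 s' * π s' a')
  rw [expVal] at h2
  rw [h2, Finset.sum_mul]
  exact Finset.sum_congr rfl fun p _ => by ring

lemma dSA_shift (m : ℕ) (f : S → A → ℝ) :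
    ∑ p : S × A, dSA d1 T π (m+1) p.1 p.2 * f p.1 p.2
      = ∑ p : S × A, dSA d1 T π m p.1 p.2 * eStep T π f p.1 p.2 := by
  calc ∑ p : S × A, dSA d1 T π (m+1) p.1 p.2 * f p.1 p.2
      = ∑ p : S × A, ∑ p' : S × A,
          dSA d1 T π m p'.1 p'.2 * (T p'.1 p'.2 p.1 * (π p.1 p.2 * f p.1 p.2)) := by
        refine Finset.sum_congr rfl fun p _ => ?_
        rw [dSA_succ, Finset.sum_mul, Finset.sum_mul]
        exact Finset.sum_congr rfl fun p' _ => by ring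
    _ = ∑ p' : S × A, ∑ p : S × A,
          dSA d1 T π m p'.1 p'.2 * (T p'.1 p'.2 p.1 * (π p.1 p.2 * f p.1 p.2)) :=
        Finset.sum_comm
    _ = ∑ p' : S × A, dSA d1 T π m p'.1 p'.2 * eStep T π f p'.1 p'.2 := by
        refine Finset.sum_congr rfl fun p' _ => ?_
        rw [← Finset.mul_sum]
        congr 1
        simp only [eStep, Fintype.sum_prod_type, Finset.mul_sum]

lemma pe_zero (hπb : ∀ s a, 0 ≤ πb s a) (hπe : ∀ s a, 0 ≤ πe s a)
    (hsupp : ∀ s a, 0 < πe s a → 0 < πb s a) {s : S} {a : A} (h : πb s a = 0) :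
    πe s a = 0 := by
  by_contra hne
  have := hsupp s a (lt_of_le_of_ne (hπe s a) (Ne.symm hne))
  rw [h] at this
  exact lt_irrefl 0 this

lemma pb_mul_div (hπb : ∀ s a, 0 ≤ πb s a) (hπe : ∀ s a, 0 ≤ πe s a)
    (hsupp : ∀ s a, 0 < πe s a → 0 < πb s a) (s : S) (a : A) :
    πb s a * (πe s a / πb s a) = πe s a := by
  by_cases h : πb s a = 0
  · rw [h, pe_zero πb πe hπb hπe hsupp h]; simp
  · rw [mul_comm, div_mul_cancel₀ _ h]

lemma KEY (hπb : ∀ s a, 0 ≤ πb s a) (hπe : ∀ s a, 0 ≤ πe s a)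
    (hsupp : ∀ s a, 0 < πe s a → 0 < πb s a) :
    ∀ (n m : ℕ) (φ : S × A → ℝ) (q : S → A → ℝ),
    expVal d1 T πb (m + n + 1) (fun τ => φ (τ m) *
        (∏ j ∈ Icc (m+1) (m+n), rho πb πe τ j) * q (τ (m+n)).1 (τ (m+n)).2)
      = ∑ p : S × A, dSA d1 T πb m p.1 p.2 * φ p * (eStep T πe)^[n] q p.1 p.2 := by
  intro n
  induction n with
  | zero =>
    intro m φ q
    have he : Icc (m+1) (m+0) = (∅ : Finset ℕ) := Finset.Icc_eq_empty (by omega)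
    have hc := expVal_coord d1 T πb m (fun p => φ p * q p.1 p.2)
    have hr : (∑ p : S × A, dSA d1 T πb m p.1 p.2 * φ p * (eStep T πe)^[0] q p.1 p.2)
        = ∑ p : S × A, dSA d1 T πb m p.1 p.2 * (φ p * q p.1 p.2) :=
      Finset.sum_congr rfl fun p _ => by simp [mul_assoc]
    rw [hr, ← hc]
    exact expVal_congr d1 T πb _ fun τ => by
      rw [he, Finset.prod_empty, mul_one, Nat.add_zero]
  | succ n IH =>
    intro m φ q
    have e1 : m + (n+1) = m + n + 1 := rfl
    rw [e1, expVal_succ]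
    have hinner : ∀ σ : Fin (m+n+1) → S × A,
        (∑ p : S × A, stepW d1 T πb (extTraj (Fin.snoc σ p)) (m+n+1) *
          ((fun τ => φ (τ m) * (∏ j ∈ Icc (m+1) (m+n+1), rho πb πe τ j) *
            q (τ (m+n+1)).1 (τ (m+n+1)).2) (extTraj (Fin.snoc σ p))))
        = φ (extTraj σ m) * (∏ j ∈ Icc (m+1) (m+n), rho πb πe (extTraj σ) j) *
            eStep T πe q (extTraj σ (m+n)).1 (extTraj σ (m+n)).2 := by
      intro σ
      have hterm : ∀ p : S × A,
          stepW d1 T πb (extTraj (Fin.snoc σ p)) (m+n+1) *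
            ((fun τ => φ (τ m) * (∏ j ∈ Icc (m+1) (m+n+1), rho πb πe τ j) *
              q (τ (m+n+1)).1 (τ (m+n+1)).2) (extTraj (Fin.snoc σ p)))
          = φ (extTraj σ m) * (∏ j ∈ Icc (m+1) (m+n), rho πb πe (extTraj σ) j) *
              (T (extTraj σ (m+n)).1 (extTraj σ (m+n)).2 p.1 *
                (πe p.1 p.2 * q p.1 p.2)) := by
        intro p
        have hτm : extTraj (Fin.snoc σ p) m = extTraj σ m :=
          extTraj_snoc_lt σ p (by omega)
        have hτmn : extTraj (Fin.snoc σ p) (m+n) = extTraj σ (m+n) :=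
          extTraj_snoc_lt σ p (by omega)
        have hτlast : extTraj (Fin.snoc σ p) (m+n+1) = p := extTraj_snoc_self σ p
        have hstep : stepW d1 T πb (extTraj (Fin.snoc σ p)) (m+n+1)
            = T (extTraj σ (m+n)).1 (extTraj σ (m+n)).2 p.1 * πb p.1 p.2 := by
          simp only [stepW, hτmn, hτlast]
        have hprod : ∏ j ∈ Icc (m+1) (m+n+1), rho πb πe (extTraj (Fin.snoc σ p)) j
            = (∏ j ∈ Icc (m+1) (m+n), rho πb πe (extTraj σ) j) *
                (πe p.1 p.2 / πb p.1 p.2) := by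
          rw [Finset.prod_Icc_succ_top (by omega)]
          congr 1
          · refine Finset.prod_congr rfl fun j hj => ?_
            have hj' : j < m + n + 1 := by
              have := (Finset.mem_Icc.mp hj).2; omega
            simp only [rho, extTraj_snoc_lt σ p hj']
          · simp only [rho, hτlast]
        simp only [hstep, hτm, hprod, hτlast]
        have hpb : πb p.1 p.2 * (πe p.1 p.2 / πb p.1 p.2) = πe p.1 p.2 :=
          pb_mul_div πb πe hπb hπe hsupp p.1 p.2
        calc T (extTraj σ (m+n)).1 (extTraj σ (m+n)).2 p.1 * πb p.1 p.2 *
              (φ (extTraj σ m) *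
                ((∏ j ∈ Icc (m+1) (m+n), rho πb πe (extTraj σ) j) *
                  (πe p.1 p.2 / πb p.1 p.2)) * q p.1 p.2)
            = φ (extTraj σ m) * (∏ j ∈ Icc (m+1) (m+n), rho πb πe (extTraj σ) j) *
              (T (extTraj σ (m+n)).1 (extTraj σ (m+n)).2 p.1 *
                ((πb p.1 p.2 * (πe p.1 p.2 / πb p.1 p.2)) * q p.1 p.2)) := by ring
          _ = _ := by rw [hpb]
      rw [Finset.sum_congr rfl fun p _ => hterm p, ← Finset.mul_sum]
      congr 1
      simp only [eStep, Fintype.sum_prod_type, Finset.mul_sum]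
    rw [Finset.sum_congr rfl fun σ _ => by rw [hinner σ]]
    have hfin : expVal d1 T πb (m+n+1) (fun τ =>
        (φ (τ m) * (∏ j ∈ Icc (m+1) (m+n), rho πb πe τ j)) *
          eStep T πe q (τ (m+n)).1 (τ (m+n)).2)
        = ∑ p : S × A, dSA d1 T πb m p.1 p.2 * φ p * (eStep T πe)^[n+1] q p.1 p.2 := by
      exact IH m φ (eStep T πe q)
    rw [← hfin]
    rfl

lemma KEY2 (hπb : ∀ s a, 0 ≤ πb s a) (hπbsum : ∀ s, ∑ a, πb s a = 1)
    (hπe : ∀ s a, 0 ≤ πe s a)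
    (hsupp : ∀ s a, 0 < πe s a → 0 < πb s a) (n m : ℕ) (φ : S × A → ℝ) (q : S → A → ℝ) :
    expVal d1 T πb (m + n + 2) (fun τ => φ (τ m) *
        (∏ j ∈ Icc (m+1) (m+n), rho πb πe τ j) *
          ∑ a : A, πe (τ (m+n+1)).1 a * q (τ (m+n+1)).1 a)
      = ∑ p : S × A, dSA d1 T πb m p.1 p.2 * φ p * (eStep T πe)^[n+1] q p.1 p.2 := by
  have e1 : m + n + 2 = (m + n + 1) + 1 := rfl
  rw [e1, expVal_succ]
  have hinner : ∀ σ : Fin (m+n+1) → S × A,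
      (∑ p : S × A, stepW d1 T πb (extTraj (Fin.snoc σ p)) (m+n+1) *
        ((fun τ => φ (τ m) * (∏ j ∈ Icc (m+1) (m+n), rho πb πe τ j) *
          ∑ a : A, πe (τ (m+n+1)).1 a * q (τ (m+n+1)).1 a) (extTraj (Fin.snoc σ p))))
      = φ (extTraj σ m) * (∏ j ∈ Icc (m+1) (m+n), rho πb πe (extTraj σ) j) *
          eStep T πe q (extTraj σ (m+n)).1 (extTraj σ (m+n)).2 := by
    intro σ
    have hterm : ∀ p : S × A,
        stepW d1 T πb (extTraj (Fin.snoc σ p)) (m+n+1) *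
          ((fun τ => φ (τ m) * (∏ j ∈ Icc (m+1) (m+n), rho πb πe τ j) *
            ∑ a : A, πe (τ (m+n+1)).1 a * q (τ (m+n+1)).1 a) (extTraj (Fin.snoc σ p)))
        = φ (extTraj σ m) * (∏ j ∈ Icc (m+1) (m+n), rho πb πe (extTraj σ) j) *
            (T (extTraj σ (m+n)).1 (extTraj σ (m+n)).2 p.1 * (πb p.1 p.2 *
              ∑ a : A, πe p.1 a * q p.1 a)) := by
      intro p
      have hτm : extTraj (Fin.snoc σ p) m = extTraj σ m :=
        extTraj_snoc_lt σ p (by omega)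
      have hτmn : extTraj (Fin.snoc σ p) (m+n) = extTraj σ (m+n) :=
        extTraj_snoc_lt σ p (by omega)
      have hτlast : extTraj (Fin.snoc σ p) (m+n+1) = p := extTraj_snoc_self σ p
      have hstep : stepW d1 T πb (extTraj (Fin.snoc σ p)) (m+n+1)
          = T (extTraj σ (m+n)).1 (extTraj σ (m+n)).2 p.1 * πb p.1 p.2 := by
        simp only [stepW, hτmn, hτlast]
      have hprod : ∏ j ∈ Icc (m+1) (m+n), rho πb πe (extTraj (Fin.snoc σ p)) j
          = ∏ j ∈ Icc (m+1) (m+n), rho πb πe (extTraj σ) j := by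
        refine Finset.prod_congr rfl fun j hj => ?_
        have hj' : j < m + n + 1 := by
          have := (Finset.mem_Icc.mp hj).2; omega
        simp only [rho, extTraj_snoc_lt σ p hj']
      simp only [hstep, hτm, hprod, hτlast]
      ring
    rw [Finset.sum_congr rfl fun p _ => hterm p, ← Finset.mul_sum]
    congr 1
    rw [Fintype.sum_prod_type]
    simp only [eStep]
    refine Finset.sum_congr rfl fun s' _ => ?_
    calc ∑ a' : A, T (extTraj σ (m+n)).1 (extTraj σ (m+n)).2 s' * (πb s' a' *
          ∑ a : A, πe s' a * q s' a)
        = (∑ a' : A, πb s' a') * (T (extTraj σ (m+n)).1 (extTraj σ (m+n)).2 s' *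
            ∑ a : A, πe s' a * q s' a) := by
          rw [Finset.sum_mul]
          exact Finset.sum_congr rfl fun a' _ => by ring
      _ = _ := by rw [hπbsum, one_mul]
  rw [Finset.sum_congr rfl fun σ _ => by rw [hinner σ]]
  have hfin : expVal d1 T πb (m+n+1) (fun τ =>
      (φ (τ m) * (∏ j ∈ Icc (m+1) (m+n), rho πb πe τ j)) *
        eStep T πe q (τ (m+n)).1 (τ (m+n)).2)
      = ∑ p : S × A, dSA d1 T πb m p.1 p.2 * φ p * (eStep T πe)^[n+1] q p.1 p.2 := by
    exact KEY d1 T πb πe hπb hπe hsupp n m φ (eStep T πe q)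
  rw [← hfin]
  rfl

lemma preP_total (hd1sum : ∑ s, d1 s = 1) (hTsum : ∀ s a, ∑ s', T s a s' = 1)
    (hπsum : ∀ s, ∑ a, π s a = 1) (m : ℕ) :
    ∑ σ : Fin m → S × A, preP d1 T π m (extTraj σ) = 1 := by
  have h := expVal_const d1 T π hd1sum hTsum hπsum m 1
  rw [expVal] at h
  simpa using h

lemma abs_expVal_le (hd1 : ∀ s, 0 ≤ d1 s) (hd1sum : ∑ s, d1 s = 1)
    (hT : ∀ s a s', 0 ≤ T s a s') (hTsum : ∀ s a, ∑ s', T s a s' = 1)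
    (hπ : ∀ s a, 0 ≤ π s a) (hπsum : ∀ s, ∑ a, π s a = 1)
    (m : ℕ) (f : (ℕ → S × A) → ℝ) (C : ℝ) (hC : ∀ τ, |f τ| ≤ C) :
    |expVal d1 T π m f| ≤ C := by
  rw [expVal]
  calc |∑ σ : Fin m → S × A, preP d1 T π m (extTraj σ) * f (extTraj σ)|
      ≤ ∑ σ : Fin m → S × A, |preP d1 T π m (extTraj σ) * f (extTraj σ)| :=
        Finset.abs_sum_le_sum_abs _ _
    _ ≤ ∑ σ : Fin m → S × A, preP d1 T π m (extTraj σ) * C := by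
        refine Finset.sum_le_sum fun σ _ => ?_
        rw [abs_mul, abs_of_nonneg (preP_nonneg d1 T π hd1 hT hπ m _)]
        exact mul_le_mul_of_nonneg_left (hC _) (preP_nonneg d1 T π hd1 hT hπ m _)
    _ = C := by rw [← Finset.sum_mul, preP_total d1 T π hd1sum hTsum hπsum m, one_mul]

lemma dSA_propagate_zero (hd1 : ∀ s, 0 ≤ d1 s) (hT : ∀ s a s', 0 ≤ T s a s')
    (hπb : ∀ s a, 0 ≤ πb s a) (hπe : ∀ s a, 0 ≤ πe s a)
    (hsupp : ∀ s a, 0 < πe s a → 0 < πb s a) (m : ℕ) (s : S) (a : A)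
    (h : dSA d1 T πb m s a = 0) : dSA d1 T πe m s a = 0 := by
  rw [dSA, expVal] at h ⊢
  have hnn : ∀ σ : Fin (m+1) → S × A, σ ∈ (Finset.univ : Finset (Fin (m+1) → S × A)) →
      0 ≤ preP d1 T πb (m+1) (extTraj σ) *
        (if extTraj σ m = (s, a) then (1:ℝ) else 0) := by
    intro σ _
    refine mul_nonneg (preP_nonneg d1 T πb hd1 hT hπb _ _) ?_
    split <;> norm_num
  have hterm := (Finset.sum_eq_zero_iff_of_nonneg hnn).mp h
  refine Finset.sum_eq_zero fun σ _ => ?_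
  by_cases hi : extTraj σ m = (s, a)
  · rw [if_pos hi, mul_one]
    have hb := hterm σ (Finset.mem_univ σ)
    rw [if_pos hi, mul_one] at hb
    rw [preP] at hb ⊢
    obtain ⟨t, ht, hzero⟩ := Finset.prod_eq_zero_iff.mp hb
    refine Finset.prod_eq_zero ht ?_
    cases t with
    | zero =>
      have hz : d1 (extTraj σ 0).1 * πb (extTraj σ 0).1 (extTraj σ 0).2 = 0 := hzero
      show d1 (extTraj σ 0).1 * πe (extTraj σ 0).1 (extTraj σ 0).2 = 0
      rcases mul_eq_zero.mp hz with h0 | h0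
      · rw [h0, zero_mul]
      · rw [pe_zero πb πe hπb hπe hsupp h0, mul_zero]
    | succ t =>
      have hz : T (extTraj σ t).1 (extTraj σ t).2 (extTraj σ (t+1)).1 *
          πb (extTraj σ (t+1)).1 (extTraj σ (t+1)).2 = 0 := hzero
      show T (extTraj σ t).1 (extTraj σ t).2 (extTraj σ (t+1)).1 *
          πe (extTraj σ (t+1)).1 (extTraj σ (t+1)).2 = 0
      rcases mul_eq_zero.mp hz with h0 | h0
      · rw [h0, zero_mul]
      · rw [pe_zero πb πe hπb hπe hsupp h0, mul_zero]
  · rw [if_neg hi, mul_zero]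

lemma summable_geom_dSA {γ : ℝ} (hγ0 : 0 ≤ γ) (hγ1 : γ < 1)
    (hd1 : ∀ s, 0 ≤ d1 s) (hd1sum : ∑ s, d1 s = 1)
    (hT : ∀ s a s', 0 ≤ T s a s') (hTsum : ∀ s a, ∑ s', T s a s' = 1)
    (hπ : ∀ s a, 0 ≤ π s a) (hπsum : ∀ s, ∑ a, π s a = 1) (s : S) (a : A) :
    Summable (fun i : ℕ => γ ^ i * dSA d1 T π i s a) := by
  refine Summable.of_nonneg_of_le
    (fun i => mul_nonneg (pow_nonneg hγ0 i) (dSA_nonneg d1 T π hd1 hT hπ i s a))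
    (fun i => ?_) (summable_geometric_of_lt_one hγ0 hγ1)
  calc γ ^ i * dSA d1 T π i s a ≤ γ ^ i * 1 :=
        mul_le_mul_of_nonneg_left
          (dSA_le_one d1 T π hd1 hd1sum hT hTsum hπ hπsum i s a) (pow_nonneg hγ0 i)
    _ = γ ^ i := mul_one _

lemma ratio_mul_Db {γ : ℝ} (hγ0 : 0 ≤ γ) (hγ1 : γ < 1)
    (hd1 : ∀ s, 0 ≤ d1 s) (hd1sum : ∑ s, d1 s = 1)
    (hT : ∀ s a s', 0 ≤ T s a s') (hTsum : ∀ s a, ∑ s', T s a s' = 1)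
    (hπb : ∀ s a, 0 ≤ πb s a) (hπbsum : ∀ s, ∑ a, πb s a = 1)
    (hπe : ∀ s a, 0 ≤ πe s a)
    (hsupp : ∀ s a, 0 < πe s a → 0 < πb s a) (s : S) (a : A) :
    (dInf d1 T πe γ s a / dInf d1 T πb γ s a) * (∑' i : ℕ, γ ^ i * dSA d1 T πb i s a)
      = ∑' i : ℕ, γ ^ i * dSA d1 T πe i s a := by
  have h1γ : (1 : ℝ) - γ ≠ 0 := ne_of_gt (sub_pos.mpr hγ1)
  have hdb : dInf d1 T πb γ s a = (1 - γ) * ∑' i : ℕ, γ ^ i * dSA d1 T πb i s a := rfl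
  have hde : dInf d1 T πe γ s a = (1 - γ) * ∑' i : ℕ, γ ^ i * dSA d1 T πe i s a := rfl
  by_cases h : (∑' i : ℕ, γ ^ i * dSA d1 T πb i s a) = 0
  · have hzero : ∀ i : ℕ, γ ^ i * dSA d1 T πb i s a = 0 := by
      intro i
      have hsumm := summable_geom_dSA d1 T πb hγ0 hγ1 hd1 hd1sum hT hTsum hπb hπbsum s a
      have hle := Summable.le_tsum hsumm i (fun j _ =>
        mul_nonneg (pow_nonneg hγ0 j) (dSA_nonneg d1 T πb hd1 hT hπb j s a))
      rw [h] at hle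
      exact le_antisymm hle
        (mul_nonneg (pow_nonneg hγ0 i) (dSA_nonneg d1 T πb hd1 hT hπb i s a))
    have hzero' : ∀ i : ℕ, γ ^ i * dSA d1 T πe i s a = 0 := by
      intro i
      rcases mul_eq_zero.mp (hzero i) with h0 | h0
      · rw [h0, zero_mul]
      · rw [dSA_propagate_zero d1 T πb πe hd1 hT hπb hπe hsupp i s a h0, mul_zero]
    have hDe : (∑' i : ℕ, γ ^ i * dSA d1 T πe i s a) = 0 := by
      rw [tsum_congr hzero']; exact tsum_zero
    rw [h, hDe, mul_zero]
  · have hdbne : dInf d1 T πb γ s a ≠ 0 := by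
      rw [hdb]; exact mul_ne_zero h1γ h
    rw [hde, hdb, mul_div_mul_left _ _ h1γ, div_mul_cancel₀ _ h]

lemma core {γ : ℝ} (hγ0 : 0 ≤ γ) (hγ1 : γ < 1)
    (hd1 : ∀ s, 0 ≤ d1 s) (hd1sum : ∑ s, d1 s = 1)
    (hT : ∀ s a s', 0 ≤ T s a s') (hTsum : ∀ s a, ∑ s', T s a s' = 1)
    (hπb : ∀ s a, 0 ≤ πb s a) (hπbsum : ∀ s, ∑ a, πb s a = 1)
    (hπe : ∀ s a, 0 ≤ πe s a)
    (hsupp : ∀ s a, 0 < πe s a → 0 < πb s a) (f : S → A → ℝ) :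
    ∑' i : ℕ, γ ^ i * ∑ p : S × A, dSA d1 T πb i p.1 p.2 *
        (dInf d1 T πe γ p.1 p.2 / dInf d1 T πb γ p.1 p.2) * f p.1 p.2
      = ∑ p : S × A, (∑' i : ℕ, γ ^ i * dSA d1 T πe i p.1 p.2) * f p.1 p.2 := by
  have hsummp : ∀ p : S × A, Summable (fun i : ℕ => γ ^ i * dSA d1 T πb i p.1 p.2) :=
    fun p => summable_geom_dSA d1 T πb hγ0 hγ1 hd1 hd1sum hT hTsum hπb hπbsum p.1 p.2
  calc ∑' i : ℕ, γ ^ i * ∑ p : S × A, dSA d1 T πb i p.1 p.2 *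
        (dInf d1 T πe γ p.1 p.2 / dInf d1 T πb γ p.1 p.2) * f p.1 p.2
      = ∑' i : ℕ, ∑ p : S × A, (γ ^ i * dSA d1 T πb i p.1 p.2) *
          ((dInf d1 T πe γ p.1 p.2 / dInf d1 T πb γ p.1 p.2) * f p.1 p.2) := by
        refine tsum_congr fun i => ?_
        rw [Finset.mul_sum]
        exact Finset.sum_congr rfl fun p _ => by ring
    _ = ∑ p : S × A, ∑' i : ℕ, (γ ^ i * dSA d1 T πb i p.1 p.2) *
          ((dInf d1 T πe γ p.1 p.2 / dInf d1 T πb γ p.1 p.2) * f p.1 p.2) :=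
        Summable.tsum_finsetSum (fun p _ => (hsummp p).mul_right _)
    _ = ∑ p : S × A, (∑' i : ℕ, γ ^ i * dSA d1 T πb i p.1 p.2) *
          ((dInf d1 T πe γ p.1 p.2 / dInf d1 T πb γ p.1 p.2) * f p.1 p.2) :=
        Finset.sum_congr rfl fun p _ => tsum_mul_right
    _ = ∑ p : S × A, (∑' i : ℕ, γ ^ i * dSA d1 T πe i p.1 p.2) * f p.1 p.2 := by
        refine Finset.sum_congr rfl fun p _ => ?_
        rw [show (∑' i : ℕ, γ ^ i * dSA d1 T πb i p.1 p.2) *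
            ((dInf d1 T πe γ p.1 p.2 / dInf d1 T πb γ p.1 p.2) * f p.1 p.2)
            = ((dInf d1 T πe γ p.1 p.2 / dInf d1 T πb γ p.1 p.2) *
                (∑' i : ℕ, γ ^ i * dSA d1 T πb i p.1 p.2)) * f p.1 p.2 from by ring]
        rw [ratio_mul_Db d1 T πb πe hγ0 hγ1 hd1 hd1sum hT hTsum hπb hπbsum hπe hsupp]

lemma coreshift {γ : ℝ} (hγ0 : 0 ≤ γ) (hγ1 : γ < 1)
    (hd1 : ∀ s, 0 ≤ d1 s) (hd1sum : ∑ s, d1 s = 1)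
    (hT : ∀ s a s', 0 ≤ T s a s') (hTsum : ∀ s a, ∑ s', T s a s' = 1)
    (hπe : ∀ s a, 0 ≤ πe s a) (hπesum : ∀ s, ∑ a, πe s a = 1) (f : S → A → ℝ) :
    ∑ p : S × A, (∑' i : ℕ, γ ^ i * dSA d1 T πe i p.1 p.2) * f p.1 p.2
      = ∑ p : S × A, dSA d1 T πe 0 p.1 p.2 * f p.1 p.2
        + γ * ∑ p : S × A, (∑' i : ℕ, γ ^ i * dSA d1 T πe i p.1 p.2) *
            eStep T πe f p.1 p.2 := by
  have hsummp : ∀ p : S × A, Summable (fun i : ℕ => γ ^ i * dSA d1 T πe i p.1 p.2) :=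
    fun p => summable_geom_dSA d1 T πe hγ0 hγ1 hd1 hd1sum hT hTsum hπe hπesum p.1 p.2
  have hsummp' : ∀ p : S × A,
      Summable (fun i : ℕ => γ ^ i * dSA d1 T πe (i+1) p.1 p.2) := by
    intro p
    refine Summable.of_nonneg_of_le
      (fun i => mul_nonneg (pow_nonneg hγ0 i) (dSA_nonneg d1 T πe hd1 hT hπe _ _ _))
      (fun i => ?_) (summable_geometric_of_lt_one hγ0 hγ1)
    calc γ ^ i * dSA d1 T πe (i+1) p.1 p.2 ≤ γ ^ i * 1 :=
          mul_le_mul_of_nonneg_left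
            (dSA_le_one d1 T πe hd1 hd1sum hT hTsum hπe hπesum _ _ _) (pow_nonneg hγ0 i)
      _ = γ ^ i := mul_one _
  have hDe : ∀ p : S × A, (∑' i : ℕ, γ ^ i * dSA d1 T πe i p.1 p.2)
      = dSA d1 T πe 0 p.1 p.2 + γ * ∑' i : ℕ, γ ^ i * dSA d1 T πe (i+1) p.1 p.2 := by
    intro p
    rw [Summable.tsum_eq_zero_add (hsummp p)]
    congr 1
    · simp
    · rw [← tsum_mul_left]
      exact tsum_congr fun i => by rw [pow_succ]; ring
  have hshift : ∑ p : S × A, (∑' i : ℕ, γ ^ i * dSA d1 T πe (i+1) p.1 p.2) * f p.1 p.2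
      = ∑ p : S × A, (∑' i : ℕ, γ ^ i * dSA d1 T πe i p.1 p.2) * eStep T πe f p.1 p.2 := by
    calc ∑ p : S × A, (∑' i : ℕ, γ ^ i * dSA d1 T πe (i+1) p.1 p.2) * f p.1 p.2
        = ∑ p : S × A, ∑' i : ℕ, (γ ^ i * dSA d1 T πe (i+1) p.1 p.2) * f p.1 p.2 :=
          Finset.sum_congr rfl fun p _ => tsum_mul_right.symm
      _ = ∑' i : ℕ, ∑ p : S × A, (γ ^ i * dSA d1 T πe (i+1) p.1 p.2) * f p.1 p.2 :=
          (Summable.tsum_finsetSum (fun p _ => (hsummp' p).mul_right _)).symm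
      _ = ∑' i : ℕ, γ ^ i * ∑ p : S × A, dSA d1 T πe (i+1) p.1 p.2 * f p.1 p.2 := by
          refine tsum_congr fun i => ?_
          rw [Finset.mul_sum]
          exact Finset.sum_congr rfl fun p _ => by ring
      _ = ∑' i : ℕ, γ ^ i * ∑ p : S × A, dSA d1 T πe i p.1 p.2 * eStep T πe f p.1 p.2 :=
          tsum_congr fun i => by rw [dSA_shift]
      _ = ∑' i : ℕ, ∑ p : S × A, (γ ^ i * dSA d1 T πe i p.1 p.2) * eStep T πe f p.1 p.2 := by
          refine tsum_congr fun i => ?_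
          rw [Finset.mul_sum]
          exact Finset.sum_congr rfl fun p _ => by ring
      _ = ∑ p : S × A, ∑' i : ℕ, (γ ^ i * dSA d1 T πe i p.1 p.2) * eStep T πe f p.1 p.2 :=
          Summable.tsum_finsetSum (fun p _ => (hsummp p).mul_right _)
      _ = ∑ p : S × A, (∑' i : ℕ, γ ^ i * dSA d1 T πe i p.1 p.2) * eStep T πe f p.1 p.2 :=
          Finset.sum_congr rfl fun p _ => tsum_mul_right
  calc ∑ p : S × A, (∑' i : ℕ, γ ^ i * dSA d1 T πe i p.1 p.2) * f p.1 p.2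
      = ∑ p : S × A, (dSA d1 T πe 0 p.1 p.2 * f p.1 p.2
          + γ * ((∑' i : ℕ, γ ^ i * dSA d1 T πe (i+1) p.1 p.2) * f p.1 p.2)) := by
        refine Finset.sum_congr rfl fun p _ => ?_
        rw [hDe p]; ring
    _ = ∑ p : S × A, dSA d1 T πe 0 p.1 p.2 * f p.1 p.2
        + γ * ∑ p : S × A, (∑' i : ℕ, γ ^ i * dSA d1 T πe (i+1) p.1 p.2) * f p.1 p.2 := by
        rw [Finset.sum_add_distrib, Finset.mul_sum]
    _ = _ := by rw [hshift]

end Aux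

/-- shift lemma for doubly-robust weights: for any `n ≥ 0` and
any (automatically bounded) `q : S × A → ℝ`,
`E[Σ_(t=1)^∞ w(t,n) γ^(t-1) q(S_t,A_t)]
  = E[Σ_(t=1)^∞ w(t-1,n) γ^(t-1) Σ_a π_e(a|S_t) q(S_t,a)]`
(series reindexed by `t = k + 1`, 0-indexed coordinates; `wDR` encodes `w(·,n)`). -/
theorem dr_shift_lemma
    (d1 : S → ℝ) (T : S → A → S → ℝ) (πb πe : S → A → ℝ)
    (γ : ℝ) (n : ℕ) (q : S → A → ℝ)
    (hd1 : ∀ s, 0 ≤ d1 s) (hd1sum : ∑ s, d1 s = 1)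
    (hT : ∀ s a s', 0 ≤ T s a s') (hTsum : ∀ s a, ∑ s', T s a s' = 1)
    (hπb : ∀ s a, 0 ≤ πb s a) (hπbsum : ∀ s, ∑ a, πb s a = 1)
    (hπe : ∀ s a, 0 ≤ πe s a) (hπesum : ∀ s, ∑ a, πe s a = 1)
    (hγ0 : 0 ≤ γ) (hγ1 : γ < 1)
    (hsupp : ∀ s a, 0 < πe s a → 0 < πb s a) :
    (∑' k : ℕ, γ ^ k * expVal d1 T πb (k + 1)
        (fun τ => wDR d1 T πb πe γ n τ (k + 1) * q (τ k).1 (τ k).2))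
      = ∑' k : ℕ, γ ^ k * expVal d1 T πb (k + 1)
          (fun τ => wDR d1 T πb πe γ n τ k *
            ∑ a : A, πe (τ k).1 a * q (τ k).1 a) := by
  classical
  -- bound for q and for the πe-average of q
  obtain ⟨Q, hQ0, hQq, hQg⟩ : ∃ Q : ℝ, 0 ≤ Q ∧ (∀ s a, |q s a| ≤ Q) ∧
      (∀ s, |∑ a : A, πe s a * q s a| ≤ Q) := by
    have h2 : (0:ℝ) ≤ ∑ p : S × A, |q p.1 p.2| :=
      Finset.sum_nonneg fun p _ => abs_nonneg _
    have hq1 : ∀ s a, |q s a| ≤ 1 + ∑ p : S × A, |q p.1 p.2| := by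
      intro s a
      have h := Finset.single_le_sum (f := fun p : S × A => |q p.1 p.2|)
        (fun p _ => abs_nonneg _) (Finset.mem_univ ((s, a) : S × A))
      calc |q s a| ≤ ∑ p : S × A, |q p.1 p.2| := h
        _ ≤ 1 + ∑ p : S × A, |q p.1 p.2| := by linarith
    refine ⟨1 + ∑ p : S × A, |q p.1 p.2|, by linarith, hq1, fun s => ?_⟩
    calc |∑ a : A, πe s a * q s a| ≤ ∑ a : A, |πe s a * q s a| :=
          Finset.abs_sum_le_sum_abs _ _
      _ ≤ ∑ a : A, πe s a * (1 + ∑ p : S × A, |q p.1 p.2|) := by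
          refine Finset.sum_le_sum fun a _ => ?_
          rw [abs_mul, abs_of_nonneg (hπe s a)]
          exact mul_le_mul_of_nonneg_left (hq1 s a) (hπe s a)
      _ = 1 + ∑ p : S × A, |q p.1 p.2| := by
          rw [← Finset.sum_mul, hπesum, one_mul]
  -- uniform bound for the weights
  obtain ⟨W, hW0, hW⟩ : ∃ W : ℝ, 0 ≤ W ∧
      ∀ (τ : ℕ → S × A) (m : ℕ), |wDR d1 T πb πe γ n τ m| ≤ W := by
    have hRm0 : (0:ℝ) ≤ ∑ p : S × A, |πe p.1 p.2 / πb p.1 p.2| :=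
      Finset.sum_nonneg fun p _ => abs_nonneg _
    have hRr0 : (0:ℝ) ≤ ∑ p : S × A,
        |dInf d1 T πe γ p.1 p.2 / dInf d1 T πb γ p.1 p.2| :=
      Finset.sum_nonneg fun p _ => abs_nonneg _
    set Rm : ℝ := 1 + ∑ p : S × A, |πe p.1 p.2 / πb p.1 p.2| with hRmdef
    set Rr : ℝ := 1 + ∑ p : S × A,
      |dInf d1 T πe γ p.1 p.2 / dInf d1 T πb γ p.1 p.2| with hRrdef
    have hRm1 : 1 ≤ Rm := by rw [hRmdef]; linarith
    have hRr1 : 1 ≤ Rr := by rw [hRrdef]; linarith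
    have hrho : ∀ (τ : ℕ → S × A) (j : ℕ), |rho πb πe τ j| ≤ Rm := by
      intro τ j
      have h := Finset.single_le_sum (f := fun p : S × A => |πe p.1 p.2 / πb p.1 p.2|)
        (fun p _ => abs_nonneg _) (Finset.mem_univ (τ j))
      rw [hRmdef]
      simp only [rho]
      calc |πe (τ j).1 (τ j).2 / πb (τ j).1 (τ j).2|
          ≤ ∑ p : S × A, |πe p.1 p.2 / πb p.1 p.2| := h
        _ ≤ 1 + ∑ p : S × A, |πe p.1 p.2 / πb p.1 p.2| := by linarith
    have hratio : ∀ x : S × A,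
        |dInf d1 T πe γ x.1 x.2 / dInf d1 T πb γ x.1 x.2| ≤ Rr := by
      intro x
      have h := Finset.single_le_sum
        (f := fun p : S × A => |dInf d1 T πe γ p.1 p.2 / dInf d1 T πb γ p.1 p.2|)
        (fun p _ => abs_nonneg _) (Finset.mem_univ x)
      rw [hRrdef]
      calc |dInf d1 T πe γ x.1 x.2 / dInf d1 T πb γ x.1 x.2|
          ≤ ∑ p : S × A, |dInf d1 T πe γ p.1 p.2 / dInf d1 T πb γ p.1 p.2| := h
        _ ≤ 1 + ∑ p : S × A, |dInf d1 T πe γ p.1 p.2 / dInf d1 T πb γ p.1 p.2| := by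
            linarith
    have hRmnn : (0:ℝ) ≤ Rm := by linarith
    have hpow1 : (1:ℝ) ≤ Rm ^ n := by
      simpa using pow_le_pow_right₀ hRm1 (Nat.zero_le n)
    have hprod : ∀ (τ : ℕ → S × A) (s : Finset ℕ), s.card ≤ n →
        |∏ j ∈ s, rho πb πe τ j| ≤ Rm ^ n := by
      intro τ s hs
      rw [Finset.abs_prod]
      calc ∏ j ∈ s, |rho πb πe τ j| ≤ ∏ _j ∈ s, Rm :=
            Finset.prod_le_prod (fun j _ => abs_nonneg _) (fun j _ => hrho τ j)
        _ = Rm ^ s.card := Finset.prod_const Rm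
        _ ≤ Rm ^ n := pow_le_pow_right₀ hRm1 hs
    refine ⟨Rr * Rm ^ n, mul_nonneg (by linarith) (pow_nonneg hRmnn n), fun τ m => ?_⟩
    rw [wDR]
    split_ifs with h1 h2
    · simp only [abs_one]
      calc (1:ℝ) = 1 * 1 := by ring
        _ ≤ Rr * Rm ^ n := mul_le_mul hRr1 hpow1 zero_le_one (by linarith)
    · calc |∏ j ∈ range m, rho πb πe τ j| ≤ Rm ^ n :=
            hprod τ (range m) (by simpa using h2)
        _ ≤ Rr * Rm ^ n := le_mul_of_one_le_left (pow_nonneg hRmnn n) hRr1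
    · rw [abs_mul]
      have hc : (Icc (m - n) (m - 1)).card ≤ n := by
        rw [Nat.card_Icc]; omega
      exact mul_le_mul (hratio _) (hprod τ _ hc) (abs_nonneg _) (by linarith)
  -- summability of both series
  have habs : ∀ (k : ℕ) (f : (ℕ → S × A) → ℝ), (∀ τ, |f τ| ≤ W * Q) →
      |γ ^ k * expVal d1 T πb (k + 1) f| ≤ W * Q * γ ^ k := by
    intro k f hf
    rw [abs_mul, abs_of_nonneg (pow_nonneg hγ0 k)]
    calc γ ^ k * |expVal d1 T πb (k+1) f| ≤ γ ^ k * (W * Q) :=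
          mul_le_mul_of_nonneg_left
            (abs_expVal_le d1 T πb hd1 hd1sum hT hTsum hπb hπbsum (k+1) f (W*Q) hf)
            (pow_nonneg hγ0 k)
      _ = W * Q * γ ^ k := by ring
  have hfLsumm : Summable (fun k : ℕ => γ ^ k * expVal d1 T πb (k + 1)
      (fun τ => wDR d1 T πb πe γ n τ (k + 1) * q (τ k).1 (τ k).2)) := by
    refine Summable.of_abs (Summable.of_nonneg_of_le (fun k => abs_nonneg _)
      (fun k => ?_) ((summable_geometric_of_lt_one hγ0 hγ1).mul_left (W*Q)))
    refine habs k _ (fun τ => ?_)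
    rw [abs_mul]
    exact mul_le_mul (hW τ _) (hQq _ _) (abs_nonneg _) hW0
  have hfRsumm : Summable (fun k : ℕ => γ ^ k * expVal d1 T πb (k + 1)
      (fun τ => wDR d1 T πb πe γ n τ k *
        ∑ a : A, πe (τ k).1 a * q (τ k).1 a)) := by
    refine Summable.of_abs (Summable.of_nonneg_of_le (fun k => abs_nonneg _)
      (fun k => ?_) ((summable_geometric_of_lt_one hγ0 hγ1).mul_left (W*Q)))
    refine habs k _ (fun τ => ?_)
    rw [abs_mul]
    exact mul_le_mul (hW τ _) (hQg _) (abs_nonneg _) hW0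
  -- splitting of products of likelihood ratios
  have hsplit : ∀ (τ : ℕ → S × A) (k : ℕ), ∏ j ∈ range (k+1), rho πb πe τ j
      = rho πb πe τ 0 * ∏ j ∈ Icc 1 k, rho πb πe τ j := by
    intro τ k
    have hins : range (k+1) = insert 0 (Icc 1 k) := by
      ext j
      simp only [Finset.mem_range, Finset.mem_insert, Finset.mem_Icc]
      omega
    rw [hins, Finset.prod_insert (by simp)]
  -- conversion of the initial weight
  have hconv : ∀ g : S → A → ℝ,
      (∑ p : S × A, dSA d1 T πb 0 p.1 p.2 * (πe p.1 p.2 / πb p.1 p.2) * g p.1 p.2)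
        = ∑ p : S × A, dSA d1 T πe 0 p.1 p.2 * g p.1 p.2 := by
    intro g
    refine Finset.sum_congr rfl fun p _ => ?_
    rw [dSA_zero, dSA_zero]
    have hpb := pb_mul_div πb πe hπb hπe hsupp p.1 p.2
    calc d1 p.1 * πb p.1 p.2 * (πe p.1 p.2 / πb p.1 p.2) * g p.1 p.2
        = d1 p.1 * (πb p.1 p.2 * (πe p.1 p.2 / πb p.1 p.2)) * g p.1 p.2 := by ring
      _ = d1 p.1 * πe p.1 p.2 * g p.1 p.2 := by rw [hpb]
  -- evaluation of the LHS terms with k < n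
  have hL_lt : ∀ k, k < n → expVal d1 T πb (k + 1)
      (fun τ => wDR d1 T πb πe γ n τ (k + 1) * q (τ k).1 (τ k).2)
      = ∑ p : S × A, dSA d1 T πe 0 p.1 p.2 * (eStep T πe)^[k] q p.1 p.2 := by
    intro k hk
    have hkey := KEY d1 T πb πe hπb hπe hsupp k 0
      (fun p : S × A => πe p.1 p.2 / πb p.1 p.2) q
    simp only [Nat.zero_add] at hkey
    have h1 : expVal d1 T πb (k + 1)
        (fun τ => wDR d1 T πb πe γ n τ (k + 1) * q (τ k).1 (τ k).2)
        = expVal d1 T πb (k + 1)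
          (fun τ => (πe (τ 0).1 (τ 0).2 / πb (τ 0).1 (τ 0).2) *
            (∏ j ∈ Icc 1 k, rho πb πe τ j) * q (τ k).1 (τ k).2) := by
      refine expVal_congr d1 T πb _ fun τ => ?_
      rw [wDR, if_neg (Nat.succ_ne_zero k), if_pos (by omega : k + 1 ≤ n), hsplit τ k]
      rfl
    rw [h1]
    calc expVal d1 T πb (k + 1)
          (fun τ => (πe (τ 0).1 (τ 0).2 / πb (τ 0).1 (τ 0).2) *
            (∏ j ∈ Icc 1 k, rho πb πe τ j) * q (τ k).1 (τ k).2)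
        = ∑ p : S × A, dSA d1 T πb 0 p.1 p.2 * (πe p.1 p.2 / πb p.1 p.2) *
            (eStep T πe)^[k] q p.1 p.2 := hkey
      _ = ∑ p : S × A, dSA d1 T πe 0 p.1 p.2 * (eStep T πe)^[k] q p.1 p.2 := hconv _
  -- evaluation of the RHS terms with k ≤ n
  have hR_le : ∀ k, k ≤ n → expVal d1 T πb (k + 1)
      (fun τ => wDR d1 T πb πe γ n τ k * ∑ a : A, πe (τ k).1 a * q (τ k).1 a)
      = ∑ p : S × A, dSA d1 T πe 0 p.1 p.2 * (eStep T πe)^[k] q p.1 p.2 := by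
    intro k hk
    cases k with
    | zero =>
      have h1 : expVal d1 T πb (0 + 1)
          (fun τ => wDR d1 T πb πe γ n τ 0 * ∑ a : A, πe (τ 0).1 a * q (τ 0).1 a)
          = expVal d1 T πb (0 + 1)
            (fun τ => (fun p : S × A => ∑ a : A, πe p.1 a * q p.1 a) (τ 0)) := by
        refine expVal_congr d1 T πb _ fun τ => ?_
        rw [wDR, if_pos rfl, one_mul]
      rw [h1]
      calc expVal d1 T πb (0 + 1)
            (fun τ => (fun p : S × A => ∑ a : A, πe p.1 a * q p.1 a) (τ 0))
          = ∑ p : S × A, dSA d1 T πb 0 p.1 p.2 *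
              (fun p : S × A => ∑ a : A, πe p.1 a * q p.1 a) p :=
            expVal_coord d1 T πb 0 (fun p : S × A => ∑ a : A, πe p.1 a * q p.1 a)
        _ = ∑ p : S × A, dSA d1 T πe 0 p.1 p.2 * (eStep T πe)^[0] q p.1 p.2 := by
            rw [Fintype.sum_prod_type, Fintype.sum_prod_type]
            refine Finset.sum_congr rfl fun s _ => ?_
            calc ∑ a : A, dSA d1 T πb 0 s a * ∑ a' : A, πe s a' * q s a'
                = d1 s * ∑ a' : A, πe s a' * q s a' := by
                  simp only [dSA_zero]
                  rw [← Finset.sum_mul, ← Finset.mul_sum, hπbsum, mul_one]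
              _ = ∑ a : A, dSA d1 T πe 0 s a * (eStep T πe)^[0] q s a := by
                  simp only [dSA_zero, Function.iterate_zero, id_eq]
                  rw [Finset.mul_sum]
                  exact Finset.sum_congr rfl fun a _ => by ring
    | succ k' =>
      have hkle : k' + 1 ≤ n := hk
      have hkey := KEY2 d1 T πb πe hπb hπbsum hπe hsupp k' 0
        (fun p : S × A => πe p.1 p.2 / πb p.1 p.2) q
      simp only [Nat.zero_add] at hkey
      have h1 : expVal d1 T πb (k' + 1 + 1)
          (fun τ => wDR d1 T πb πe γ n τ (k' + 1) *
            ∑ a : A, πe (τ (k' + 1)).1 a * q (τ (k' + 1)).1 a)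
          = expVal d1 T πb (k' + 1 + 1)
            (fun τ => (πe (τ 0).1 (τ 0).2 / πb (τ 0).1 (τ 0).2) *
              (∏ j ∈ Icc 1 k', rho πb πe τ j) *
              ∑ a : A, πe (τ (k' + 1)).1 a * q (τ (k' + 1)).1 a) := by
        refine expVal_congr d1 T πb _ fun τ => ?_
        rw [wDR, if_neg (Nat.succ_ne_zero k'), if_pos hkle, hsplit τ k']
        rfl
      rw [h1]
      calc expVal d1 T πb (k' + 1 + 1)
            (fun τ => (πe (τ 0).1 (τ 0).2 / πb (τ 0).1 (τ 0).2) *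
              (∏ j ∈ Icc 1 k', rho πb πe τ j) *
              ∑ a : A, πe (τ (k' + 1)).1 a * q (τ (k' + 1)).1 a)
          = ∑ p : S × A, dSA d1 T πb 0 p.1 p.2 * (πe p.1 p.2 / πb p.1 p.2) *
              (eStep T πe)^[k' + 1] q p.1 p.2 := hkey
        _ = ∑ p : S × A, dSA d1 T πe 0 p.1 p.2 *
              (eStep T πe)^[k' + 1] q p.1 p.2 := hconv _
  -- evaluation of the LHS tail terms
  have hL_ge : ∀ i : ℕ, expVal d1 T πb (i + n + 1)
      (fun τ => wDR d1 T πb πe γ n τ (i + n + 1) * q (τ (i + n)).1 (τ (i + n)).2)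
      = ∑ p : S × A, dSA d1 T πb i p.1 p.2 *
          (dInf d1 T πe γ p.1 p.2 / dInf d1 T πb γ p.1 p.2) *
          (eStep T πe)^[n] q p.1 p.2 := by
    intro i
    have hkey := KEY d1 T πb πe hπb hπe hsupp n i
      (fun p : S × A => dInf d1 T πe γ p.1 p.2 / dInf d1 T πb γ p.1 p.2) q
    rw [← hkey]
    refine expVal_congr d1 T πb _ fun τ => ?_
    rw [wDR, if_neg (by omega), if_neg (by omega)]
    rw [show i + n + 1 - n - 1 = i from by omega,
      show i + n + 1 - n = i + 1 from by omega,
      show i + n + 1 - 1 = i + n from by omega]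
  -- evaluation of the RHS tail terms
  have hR_gt : ∀ i : ℕ, expVal d1 T πb (i + 1 + n + 1)
      (fun τ => wDR d1 T πb πe γ n τ (i + 1 + n) *
        ∑ a : A, πe (τ (i + 1 + n)).1 a * q (τ (i + 1 + n)).1 a)
      = ∑ p : S × A, dSA d1 T πb i p.1 p.2 *
          (dInf d1 T πe γ p.1 p.2 / dInf d1 T πb γ p.1 p.2) *
          (eStep T πe)^[n + 1] q p.1 p.2 := by
    intro i
    rw [show i + 1 + n = i + n + 1 from by omega]
    have hkey := KEY2 d1 T πb πe hπb hπbsum hπe hsupp n i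
      (fun p : S × A => dInf d1 T πe γ p.1 p.2 / dInf d1 T πb γ p.1 p.2) q
    have h1 : expVal d1 T πb (i + n + 1 + 1)
        (fun τ => wDR d1 T πb πe γ n τ (i + n + 1) *
          ∑ a : A, πe (τ (i + n + 1)).1 a * q (τ (i + n + 1)).1 a)
        = expVal d1 T πb (i + n + 1 + 1)
          (fun τ => (dInf d1 T πe γ (τ i).1 (τ i).2 / dInf d1 T πb γ (τ i).1 (τ i).2) *
            (∏ j ∈ Icc (i + 1) (i + n), rho πb πe τ j) *
            ∑ a : A, πe (τ (i + n + 1)).1 a * q (τ (i + n + 1)).1 a) := by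
      refine expVal_congr d1 T πb _ fun τ => ?_
      rw [wDR, if_neg (by omega), if_neg (by omega)]
      rw [show i + n + 1 - n - 1 = i from by omega,
        show i + n + 1 - n = i + 1 from by omega,
        show i + n + 1 - 1 = i + n from by omega]
    rw [h1]
    exact hkey
  -- split both series at n
  rw [← Summable.sum_add_tsum_nat_add n hfLsumm, ← Summable.sum_add_tsum_nat_add n hfRsumm]
  congr 1
  · refine Finset.sum_congr rfl fun k hk => ?_
    have hkn : k < n := Finset.mem_range.mp hk
    rw [hL_lt k hkn, hR_le k hkn.le]
  · -- tails
    have hsummtailR : Summable (fun i : ℕ => γ ^ (i + n) * expVal d1 T πb (i + n + 1)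
        (fun τ => wDR d1 T πb πe γ n τ (i + n) *
          ∑ a : A, πe (τ (i + n)).1 a * q (τ (i + n)).1 a)) := by
      have h := (summable_nat_add_iff (f := fun k : ℕ => γ ^ k * expVal d1 T πb (k + 1)
        (fun τ => wDR d1 T πb πe γ n τ k *
          ∑ a : A, πe (τ k).1 a * q (τ k).1 a)) n).mpr hfRsumm
      exact h
    have hA : (∑' i : ℕ, γ ^ (i + n) * expVal d1 T πb (i + n + 1)
        (fun τ => wDR d1 T πb πe γ n τ (i + n + 1) * q (τ (i + n)).1 (τ (i + n)).2))
        = γ ^ n * ∑' i : ℕ, γ ^ i * ∑ p : S × A, dSA d1 T πb i p.1 p.2 *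
            (dInf d1 T πe γ p.1 p.2 / dInf d1 T πb γ p.1 p.2) *
            (eStep T πe)^[n] q p.1 p.2 := by
      rw [← tsum_mul_left]
      refine tsum_congr fun i => ?_
      rw [hL_ge i, pow_add]
      ring
    have hB : (∑' i : ℕ, γ ^ (i + n) * expVal d1 T πb (i + n + 1)
        (fun τ => wDR d1 T πb πe γ n τ (i + n) *
          ∑ a : A, πe (τ (i + n)).1 a * q (τ (i + n)).1 a))
        = γ ^ n * ((∑ p : S × A, dSA d1 T πe 0 p.1 p.2 * (eStep T πe)^[n] q p.1 p.2)
          + γ * ∑' i : ℕ, γ ^ i * ∑ p : S × A, dSA d1 T πb i p.1 p.2 *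
              (dInf d1 T πe γ p.1 p.2 / dInf d1 T πb γ p.1 p.2) *
              (eStep T πe)^[n + 1] q p.1 p.2) := by
      rw [Summable.tsum_eq_zero_add hsummtailR]
      have hz : γ ^ (0 + n) * expVal d1 T πb (0 + n + 1)
          (fun τ => wDR d1 T πb πe γ n τ (0 + n) *
            ∑ a : A, πe (τ (0 + n)).1 a * q (τ (0 + n)).1 a)
          = γ ^ n * ∑ p : S × A, dSA d1 T πe 0 p.1 p.2 *
              (eStep T πe)^[n] q p.1 p.2 := by
        simp only [Nat.zero_add]
        rw [hR_le n le_rfl]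
      have hs : (∑' i : ℕ, γ ^ (i + 1 + n) * expVal d1 T πb (i + 1 + n + 1)
          (fun τ => wDR d1 T πb πe γ n τ (i + 1 + n) *
            ∑ a : A, πe (τ (i + 1 + n)).1 a * q (τ (i + 1 + n)).1 a))
          = γ ^ n * (γ * ∑' i : ℕ, γ ^ i * ∑ p : S × A, dSA d1 T πb i p.1 p.2 *
              (dInf d1 T πe γ p.1 p.2 / dInf d1 T πb γ p.1 p.2) *
              (eStep T πe)^[n + 1] q p.1 p.2) := by
        rw [← tsum_mul_left, ← tsum_mul_left]
        refine tsum_congr fun i => ?_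
        rw [hR_gt i, show i + 1 + n = n + (i + 1) from by omega, pow_add, pow_succ]
        ring
      rw [hz, hs]
      ring
    rw [hA, hB]
    have hcoreN := core d1 T πb πe hγ0 hγ1 hd1 hd1sum hT hTsum hπb hπbsum hπe hsupp
      ((eStep T πe)^[n] q)
    have hcoreN1 := core d1 T πb πe hγ0 hγ1 hd1 hd1sum hT hTsum hπb hπbsum hπe hsupp
      ((eStep T πe)^[n + 1] q)
    rw [hcoreN, hcoreN1]
    have hcs := coreshift d1 T πe hγ0 hγ1 hd1 hd1sum hT hTsum hπe hπesum
      ((eStep T πe)^[n] q)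
    rw [hcs]
    have hee : (∑ p : S × A, (∑' i : ℕ, γ ^ i * dSA d1 T πe i p.1 p.2) *
        eStep T πe ((eStep T πe)^[n] q) p.1 p.2)
        = ∑ p : S × A, (∑' i : ℕ, γ ^ i * dSA d1 T πe i p.1 p.2) *
            (eStep T πe)^[n + 1] q p.1 p.2 := by
      refine Finset.sum_congr rfl fun p _ => ?_
      rw [← Function.iterate_succ_apply' (eStep T πe) n q]
    rw [hee]
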